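/- Let n ≥ 1, L > 0, and let f : ℝⁿ → ℝ belong to F_{−L,L}. Assume the set X⋆ of global minimizers of f is nonempty, with minimum value f⋆, and that f has quadratic functional growth with constant μ_q ∈ (L/2, L) on the sublevel set X = {x : f(x) ≤ f(x¹)} of a point x¹ ∈ ℝⁿ. Let the gradient-descent iterates be defined by x^{k+1} = x^k − (1/L)∇f(x^k) for k = 1, …, N. Then f(x^{N+1}) − f⋆ ≤ (L/μ_q)(2 − 2μ_q/L)^N · (f(x¹) − f⋆). -/

import Mathlib

open Set
open scoped RealInnerProductSpace

variable {E : Type*} [NormedAddCommGroup E] [InnerProductSpace ℝ E] [CompleteSpace E]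

lemma my_grad_ineq {g : E → ℝ} (hg : ConvexOn ℝ univ g) {x gx : E}
    (h : HasGradientAt g gx x) (y : E) : g x + ⟪gx, y - x⟫ ≤ g y := by
  have hline : HasDerivAt (fun t : ℝ => x + t • (y - x)) (y - x) 0 := by
    simpa using ((hasDerivAt_id (0:ℝ)).smul_const (y - x)).const_add x
  have hF : HasFDerivAt g (InnerProductSpace.toDual ℝ E gx) (x + (0:ℝ) • (y - x)) := by
    simpa using (hasGradientAt_iff_hasFDerivAt.mp h)
  have hφ : HasDerivAt (fun t : ℝ => g (x + t • (y - x))) ⟪gx, y - x⟫ 0 := by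
    simpa [InnerProductSpace.toDual_apply_apply, Function.comp_def] using hF.comp_hasDerivAt 0 hline
  have hconv : ConvexOn ℝ univ (fun t : ℝ => g (x + t • (y - x))) := by
    have := hg.comp_affineMap (AffineMap.lineMap x y : ℝ →ᵃ[ℝ] E)
    simp only [Function.comp_def] at this
    refine (this.subset (subset_preimage_univ) (convex_univ)).congr ?_
    intro t _
    simp [AffineMap.lineMap_apply]
    abel_nf
  have hs := hconv.le_slope_of_hasDerivAt (mem_univ (0:ℝ)) (mem_univ 1) one_pos hφ
  rw [slope_def_field] at hs
  simp only [one_smul, zero_smul, add_zero, sub_zero, div_one] at hs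
  have h1 : x + (y - x) = y := by abel
  rw [h1] at hs
  linarith

lemma my_h1grad {f : E → ℝ} {f' : E → E} (hgrad : ∀ x, HasGradientAt f (f' x) x) (L : ℝ) (w : E) :
    HasGradientAt (fun v => L / 2 * ‖v‖ ^ 2 - f v) (L • w - f' w) w := by
  rw [hasGradientAt_iff_hasFDerivAt]
  have h1 : HasFDerivAt (fun v : E => L / 2 * ‖v‖ ^ 2) ((L/2) • (2 • (innerSL ℝ w))) w :=
    (hasStrictFDerivAt_norm_sq w).hasFDerivAt.const_mul (L/2)
  have h2 : HasFDerivAt f (InnerProductSpace.toDual ℝ E (f' w)) w := hgrad w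
  refine (h1.sub h2).congr_fderiv ?_
  ext v
  simp [inner_sub_left, real_inner_smul_left]
  ring

lemma my_h2grad {f : E → ℝ} {f' : E → E} (hgrad : ∀ x, HasGradientAt f (f' x) x) (L : ℝ) (w : E) :
    HasGradientAt (fun v => f v - (-L) / 2 * ‖v‖ ^ 2) (f' w + L • w) w := by
  rw [hasGradientAt_iff_hasFDerivAt]
  have h1 : HasFDerivAt (fun v : E => (-L) / 2 * ‖v‖ ^ 2) (((-L)/2) • (2 • (innerSL ℝ w))) w :=
    (hasStrictFDerivAt_norm_sq w).hasFDerivAt.const_mul ((-L)/2)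
  have h2 : HasFDerivAt f (InnerProductSpace.toDual ℝ E (f' w)) w := hgrad w
  refine (h2.sub h1).congr_fderiv ?_
  ext v
  simp [inner_add_left, real_inner_smul_left]
  ring

lemma my_key {f : E → ℝ} {f' : E → E} (hgrad : ∀ x, HasGradientAt f (f' x) x)
    {L : ℝ} (hL : 0 < L)
    (hupper : ConvexOn ℝ univ (fun x => L / 2 * ‖x‖ ^ 2 - f x))
    (hlower : ConvexOn ℝ univ (fun x => f x - (-L) / 2 * ‖x‖ ^ 2))
    {z : E} (hz : f' z = 0) (x0 : E) :
    2 * (f x0 - f z) + ‖f' x0‖ ^ 2 / (2 * L) - L / 2 * ‖x0 - z‖ ^ 2 ≤ ⟪f' x0, x0 - z⟫ := by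
  obtain ⟨u, hgu⟩ : ∃ u : E, f' x0 = (2 * L) • u :=
    ⟨(1 / (2 * L)) • f' x0, by rw [smul_smul, mul_one_div, div_self (by positivity), one_smul]⟩
  have hng : ‖f' x0‖ ^ 2 / (2 * L) = 2 * L * ⟪u, u⟫ := by
    rw [hgu, ← real_inner_self_eq_norm_sq, real_inner_smul_left, real_inner_smul_right]
    field_simp
  set a : E := (1/2 : ℝ) • (x0 + z) + u with ha
  have I1 := my_grad_ineq hupper (my_h1grad hgrad L z) a
  have I2 := my_grad_ineq hlower (my_h2grad hgrad L x0) a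
  rw [hz] at I1
  rw [hng]
  rw [hgu] at I2 ⊢
  simp only [ha, sub_zero, ← real_inner_self_eq_norm_sq, inner_sub_left, inner_sub_right,
    inner_add_left, inner_add_right, real_inner_smul_left, real_inner_smul_right,
    inner_zero_left, inner_zero_right] at I1 I2 ⊢
  simp only [real_inner_comm z x0, real_inner_comm u x0, real_inner_comm u z] at I1 I2 ⊢
  linarith

lemma my_descent {f : E → ℝ} {f' : E → E} (hgrad : ∀ x, HasGradientAt f (f' x) x)
    {L : ℝ} (hL : 0 < L)
    (hupper : ConvexOn ℝ univ (fun x => L / 2 * ‖x‖ ^ 2 - f x)) (w : E) :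
    f (w - (1 / L) • f' w) ≤ f w := by
  obtain ⟨v, hgv⟩ : ∃ v : E, f' w = L • v :=
    ⟨(1 / L) • f' w, by rw [smul_smul, mul_one_div, div_self hL.ne', one_smul]⟩
  have hv : (1 / L) • f' w = v := by
    rw [hgv, smul_smul, one_div, inv_mul_cancel₀ hL.ne', one_smul]
  rw [hv]
  have I := my_grad_ineq hupper (my_h1grad hgrad L w) (w - v)
  rw [hgv] at I
  simp only [← real_inner_self_eq_norm_sq, inner_sub_left, inner_sub_right,
    real_inner_smul_left, real_inner_smul_right] at I
  simp only [real_inner_comm w v] at I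
  nlinarith [real_inner_self_nonneg (x := v), hL]

lemma my_quad_ub {f : E → ℝ} {f' : E → E} (hgrad : ∀ x, HasGradientAt f (f' x) x)
    {L : ℝ}
    (hupper : ConvexOn ℝ univ (fun x => L / 2 * ‖x‖ ^ 2 - f x))
    {z : E} (hz : f' z = 0) (y : E) :
    f y ≤ f z + L / 2 * ‖y - z‖ ^ 2 := by
  have I := my_grad_ineq hupper (my_h1grad hgrad L z) y
  rw [hz] at I
  simp only [sub_zero, ← real_inner_self_eq_norm_sq, inner_sub_left, inner_sub_right,
    real_inner_smul_left, real_inner_smul_right] at I ⊢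
  simp only [real_inner_comm y z] at I ⊢
  nlinarith [I]

theorem stmt_13 (n : ℕ) (hn : 1 ≤ n)
    (f : EuclideanSpace ℝ (Fin n) → ℝ)
    (f' : EuclideanSpace ℝ (Fin n) → EuclideanSpace ℝ (Fin n))
    (L : ℝ) (hL : 0 < L)
    (hgrad : ∀ x, HasGradientAt f (f' x) x)
    (hupper : ConvexOn ℝ univ (fun x => L / 2 * ‖x‖ ^ 2 - f x))
    (hlower : ConvexOn ℝ univ (fun x => f x - (-L) / 2 * ‖x‖ ^ 2))
    (xs : EuclideanSpace ℝ (Fin n)) (hxs : ∀ z, f xs ≤ f z)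
    (μq : ℝ) (hμq : μq ∈ Ioo (L / 2) L)
    (N : ℕ) (x : ℕ → EuclideanSpace ℝ (Fin n))
    (hiter : ∀ k, 1 ≤ k → k ≤ N → x (k + 1) = x k - (1 / L) • f' (x k))
    (hQF : ∀ y, f y ≤ f (x 1) →
      μq / 2 * (Metric.infDist y {z | ∀ w, f z ≤ f w}) ^ 2 ≤ f y - f xs) :
    f (x (N + 1)) - f xs ≤ L / μq * (2 - 2 * μq / L) ^ N * (f (x 1) - f xs) := by
  classical
  set S : Set (EuclideanSpace ℝ (Fin n)) := {z | ∀ w, f z ≤ f w} with hS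
  have hdiff : Differentiable ℝ f := fun w => (hgrad w).differentiableAt
  have hSclosed : IsClosed S := by
    have hSeq : S = ⋂ w, {z | f z ≤ f w} := by ext z; simp [hS, Set.mem_iInter]
    rw [hSeq]
    exact isClosed_iInter fun w => isClosed_le hdiff.continuous continuous_const
  have hSne : S.Nonempty := ⟨xs, hxs⟩
  have hzero : ∀ z ∈ S, f' z = 0 := by
    intro z hzS
    have hloc : IsLocalMin f z := Filter.Eventually.of_forall hzS
    have h0 := hloc.hasFDerivAt_eq_zero (hgrad z)
    have h1 := congrArg (InnerProductSpace.toDual ℝ (EuclideanSpace ℝ (Fin n))).symm h0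
    simpa using h1
  have hfz : ∀ z ∈ S, f z = f xs := fun z hzS => le_antisymm (hzS xs) (hxs z)
  set c : ℝ := 2 - 2 * μq / L with hc
  have hμ0 : 0 < μq := lt_trans (by positivity) hμq.1
  have hc0 : 0 ≤ c := by
    have h2 := hμq.2
    rw [hc, sub_nonneg, div_le_iff₀ hL]
    linarith
  have hmono : ∀ k, 1 ≤ k → k ≤ N + 1 → f (x k) ≤ f (x 1) := by
    intro k hk1 hkN
    induction k with
    | zero => omega
    | succ m ih =>
      rcases Nat.eq_or_lt_of_le hk1 with h1 | h1
      · rw [← h1]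
      · have hm1 : 1 ≤ m := by omega
        have hmN : m ≤ N := by omega
        calc f (x (m + 1)) ≤ f (x m) := by
              rw [hiter m hm1 hmN]; exact my_descent hgrad hL hupper (x m)
          _ ≤ f (x 1) := ih hm1 (by omega)
  have hstep : ∀ k, 1 ≤ k → k ≤ N →
      Metric.infDist (x (k + 1)) S ^ 2 ≤ c * Metric.infDist (x k) S ^ 2 := by
    intro k hk1 hkN
    obtain ⟨z, hzS, hdz⟩ := hSclosed.exists_infDist_eq_dist hSne (x k)
    have hkey := my_key hgrad hL hupper hlower (hzero z hzS) (x k)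
    have hQ := hQF (x k) (hmono k hk1 (by omega))
    rw [hfz z hzS] at hkey
    have hdz' : Metric.infDist (x k) S = ‖x k - z‖ := by rw [hdz, dist_eq_norm]
    have hsq : Metric.infDist (x (k + 1)) S ^ 2 ≤ ‖x (k + 1) - z‖ ^ 2 := by
      have hle : Metric.infDist (x (k + 1)) S ≤ ‖x (k + 1) - z‖ := by
        rw [← dist_eq_norm]; exact Metric.infDist_le_dist_of_mem hzS
      exact pow_le_pow_left₀ Metric.infDist_nonneg hle 2
    rw [hdz'] at hQ ⊢
    refine hsq.trans ?_
    rw [hiter k hk1 hkN]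
    obtain ⟨u, hgu⟩ : ∃ u, f' (x k) = (2 * L) • u :=
      ⟨(1 / (2 * L)) • f' (x k), by
        rw [smul_smul, mul_one_div, div_self (by positivity), one_smul]⟩
    have h2u : (1 / L) • f' (x k) = (2 : ℝ) • u := by
      rw [hgu, smul_smul]
      congr 1
      field_simp
    rw [h2u]
    have hexp : ‖x k - (2 : ℝ) • u - z‖ ^ 2
        = ‖x k - z‖ ^ 2 - 4 * ⟪u, x k - z⟫ + 4 * ⟪u, u⟫ := by
      simp only [← real_inner_self_eq_norm_sq, inner_sub_left, inner_sub_right,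
        real_inner_smul_left, real_inner_smul_right]
      simp only [real_inner_comm (x k) u, real_inner_comm z u]
      ring
    rw [hexp]
    rw [hgu] at hkey
    have hn2 : ‖(2 * L) • u‖ ^ 2 / (2 * L) = 2 * L * ⟪u, u⟫ := by
      rw [← real_inner_self_eq_norm_sq, real_inner_smul_left, real_inner_smul_right]
      field_simp
    rw [hn2, real_inner_smul_left] at hkey
    have hgoal : (2 - 2 * μq / L) * ‖x k - z‖ ^ 2
        = ((2 * L - 2 * μq) * ‖x k - z‖ ^ 2) / L := by
      field_simp
    rw [hc, hgoal, le_div_iff₀ hL]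
    have hinner : ⟪u, x k - z⟫ = ⟪u, x k⟫ - ⟪u, z⟫ := inner_sub_right u (x k) z
    nlinarith [hkey, hQ, hL]
  have hpow : ∀ k, 1 ≤ k → k ≤ N + 1 →
      Metric.infDist (x k) S ^ 2 ≤ c ^ (k - 1) * Metric.infDist (x 1) S ^ 2 := by
    intro k hk1 hkN
    induction k with
    | zero => omega
    | succ m ih =>
      rcases Nat.eq_or_lt_of_le hk1 with h1 | h1
      · rw [← h1]; simp
      · have hm1 : 1 ≤ m := by omega
        have ihm := ih hm1 (by omega)
        have hs := hstep m hm1 (by omega)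
        have hmm : m + 1 - 1 = (m - 1) + 1 := by omega
        rw [hmm, pow_succ]
        calc Metric.infDist (x (m + 1)) S ^ 2 ≤ c * Metric.infDist (x m) S ^ 2 := hs
          _ ≤ c * (c ^ (m - 1) * Metric.infDist (x 1) S ^ 2) :=
              mul_le_mul_of_nonneg_left ihm hc0
          _ = c ^ (m - 1) * c * Metric.infDist (x 1) S ^ 2 := by ring
  obtain ⟨z, hzS, hdz⟩ := hSclosed.exists_infDist_eq_dist hSne (x (N + 1))
  have hub : f (x (N + 1)) ≤ f xs + L / 2 * ‖x (N + 1) - z‖ ^ 2 := by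
    have := my_quad_ub hgrad hupper (hzero z hzS) (x (N + 1))
    rwa [hfz z hzS] at this
  have hdz' : Metric.infDist (x (N + 1)) S = ‖x (N + 1) - z‖ := by rw [hdz, dist_eq_norm]
  have hp := hpow (N + 1) (by omega) le_rfl
  rw [Nat.add_sub_cancel, hdz'] at hp
  have hd1 : Metric.infDist (x 1) S ^ 2 ≤ 2 / μq * (f (x 1) - f xs) := by
    have := hQF (x 1) le_rfl
    rw [div_mul_eq_mul_div, le_div_iff₀ hμ0]
    nlinarith [this]
  have hcN : 0 ≤ c ^ N := pow_nonneg hc0 N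
  have h1 : f (x (N + 1)) - f xs ≤ L / 2 * ‖x (N + 1) - z‖ ^ 2 := by linarith
  have h2 : L / 2 * ‖x (N + 1) - z‖ ^ 2 ≤ L / 2 * (c ^ N * Metric.infDist (x 1) S ^ 2) :=
    mul_le_mul_of_nonneg_left hp (by positivity)
  have h3 : c ^ N * Metric.infDist (x 1) S ^ 2 ≤ c ^ N * (2 / μq * (f (x 1) - f xs)) :=
    mul_le_mul_of_nonneg_left hd1 hcN
  have h3' : L / 2 * (c ^ N * Metric.infDist (x 1) S ^ 2)
      ≤ L / 2 * (c ^ N * (2 / μq * (f (x 1) - f xs))) :=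
    mul_le_mul_of_nonneg_left h3 (by positivity)
  have heq : L / 2 * (c ^ N * (2 / μq * (f (x 1) - f xs)))
      = L / μq * c ^ N * (f (x 1) - f xs) := by
    field_simp
  rw [hc] at heq
  linarith
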